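/- Let T be a nilpotent linear operator on a finite-dimensional vector space V, with q : V → V/Im(T) the canonical projection. A q-basis B has minimum K-weight if and only if for every m, the image under q of B ∩ Ker(T^m) spans the image under q of Ker(T^m). -/

import Mathlib

/-- A `q`-basis: a finite set mapping injectively under the quotient map
`q : V → V/Im(T)` to a basis of `V/Im(T)`. -/
def IsQBasis {k V : Type*} [Field k] [AddCommGroup V] [Module k V]
    (T : V →ₗ[k] V) (B : Finset V) : Prop :=
  Set.InjOn (Submodule.mkQ (LinearMap.range T)) (B : Set V) ∧
  LinearIndependent k (fun b : B => Submodule.mkQ (LinearMap.range T) b) ∧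
  Submodule.span k (Submodule.mkQ (LinearMap.range T) '' (B : Set V)) = ⊤

section Aux

open Submodule Module

variable {k V : Type*} [Field k] [AddCommGroup V] [Module k V]

lemma pow_apply_zero_mono (T : V →ₗ[k] V) {v : V} {a b : ℕ} (h : (T ^ a) v = 0) (hab : a ≤ b) :
    (T ^ b) v = 0 := by
  obtain ⟨c, rfl⟩ := Nat.exists_eq_add_of_le hab
  rw [add_comm, pow_add, Module.End.mul_apply, h, map_zero]

lemma K_le_iff (T : V →ₗ[k] V) {N : ℕ} (hN : T ^ N = 0) (K : V → ℕ)
    (hK : ∀ v, K v = sInf {m : ℕ | (T ^ m) v = 0}) (v : V) (m : ℕ) :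
    K v ≤ m ↔ (T ^ m) v = 0 := by
  have hne : {m : ℕ | (T ^ m) v = 0}.Nonempty := ⟨N, by simp [hN]⟩
  constructor
  · intro h
    have h0 : (T ^ (K v)) v = 0 := by
      have := Nat.sInf_mem hne
      rwa [← hK v] at this
    exact pow_apply_zero_mono T h0 h
  · intro h
    rw [hK]
    exact Nat.sInf_le h

lemma qb_image_indep (T : V →ₗ[k] V) {B : Finset V} (hB : IsQBasis T B) :
    LinearIndependent k
      ((↑) : ((LinearMap.range T).mkQ '' (B : Set V)) → V ⧸ LinearMap.range T) := by
  rw [Set.image_eq_range]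
  exact hB.2.1.linearIndepOn_id

variable [FiniteDimensional k V]

omit [FiniteDimensional k V] in
lemma qb_card (T : V →ₗ[k] V) {B : Finset V} (hB : IsQBasis T B) :
    B.card = finrank k (V ⧸ LinearMap.range T) := by
  have himg : (Set.range fun b : B => (LinearMap.range T).mkQ b)
      = (LinearMap.range T).mkQ '' (B : Set V) := by
    ext x
    simp [Set.mem_image, Subtype.exists]
  have hsp : ⊤ ≤ span k (Set.range fun b : B => (LinearMap.range T).mkQ b) := by
    rw [himg, hB.2.2]
  have hb : Basis B k (V ⧸ LinearMap.range T) := Basis.mk hB.2.1 hsp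
  rw [finrank_eq_card_basis hb, Fintype.card_coe]

open scoped Classical in
lemma lemA (T : V →ₗ[k] V) {B : Finset V} (hB : IsQBasis T B) (m : ℕ) :
    ((B.filter fun b => (T ^ m) b = 0).card ≤
      finrank k ((LinearMap.ker (T ^ m)).map (LinearMap.range T).mkQ)) ∧
    ((B.filter fun b => (T ^ m) b = 0).card =
      finrank k ((LinearMap.ker (T ^ m)).map (LinearMap.range T).mkQ) ↔
      (LinearMap.range T).mkQ '' (LinearMap.ker (T ^ m) : Set V) ⊆
        (span k ((LinearMap.range T).mkQ '' ((B : Set V) ∩ (LinearMap.ker (T ^ m) : Set V)))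
          : Set (V ⧸ LinearMap.range T))) := by
  set Q := (LinearMap.range T).mkQ with hQ
  set F := B.filter fun b => (T ^ m) b = 0 with hF
  have hFsub : (F : Set V) = (B : Set V) ∩ (LinearMap.ker (T ^ m) : Set V) := by
    ext x
    simp [hF, LinearMap.mem_ker, Set.mem_inter_iff]
  have himg : ((F.image Q : Finset _) : Set _) =
      Q '' ((B : Set V) ∩ (LinearMap.ker (T ^ m) : Set V)) := by
    rw [Finset.coe_image, hFsub]
  have hind : LinearIndependent k
      ((↑) : (Q '' ((B : Set V) ∩ (LinearMap.ker (T ^ m) : Set V))) → V ⧸ LinearMap.range T) :=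
    LinearIndepOn.mono (R := k) (v := id) (qb_image_indep T hB) (Set.image_mono Set.inter_subset_left)
  have hcard : (F.image Q).card = F.card :=
    Finset.card_image_of_injOn (hB.1.mono (by rw [hFsub]; exact Set.inter_subset_left))
  have hindF : LinearIndependent k
      ((↑) : ((F.image Q : Finset _) : Set (V ⧸ LinearMap.range T)) → V ⧸ LinearMap.range T) := by
    rw [himg]
    exact hind
  have hrank : finrank k (span k ((F.image Q : Finset _) : Set (V ⧸ LinearMap.range T)))
      = (F.image Q).card :=
    finrank_span_finset_eq_card (s := F.image Q) hindF
  have hle : span k ((F.image Q : Finset _) : Set (V ⧸ LinearMap.range T)) ≤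
      (LinearMap.ker (T ^ m)).map Q := by
    rw [span_le, himg]
    rintro _ ⟨x, ⟨-, hx⟩, rfl⟩
    exact ⟨x, hx, rfl⟩
  have hmapco : (((LinearMap.ker (T ^ m)).map Q : Submodule k (V ⧸ LinearMap.range T)) : Set _)
      = Q '' (LinearMap.ker (T ^ m) : Set V) := Submodule.map_coe Q _
  constructor
  · calc F.card = (F.image Q).card := hcard.symm
      _ = finrank k (span k ((F.image Q : Finset _) : Set (V ⧸ LinearMap.range T))) := hrank.symm
      _ ≤ finrank k ((LinearMap.ker (T ^ m)).map Q) := Submodule.finrank_mono hle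
  · constructor
    · intro h
      have heq : span k ((F.image Q : Finset _) : Set (V ⧸ LinearMap.range T))
          = (LinearMap.ker (T ^ m)).map Q := by
        apply eq_of_le_of_finrank_le hle
        rw [hrank, hcard, h]
      rw [← hmapco, ← himg, heq]
    · intro h
      have hge : (LinearMap.ker (T ^ m)).map Q ≤
          span k ((F.image Q : Finset _) : Set (V ⧸ LinearMap.range T)) := by
        rw [himg]
        exact SetLike.coe_subset_coe.mp (by rw [hmapco]; exact h)
      have heq : span k ((F.image Q : Finset _) : Set (V ⧸ LinearMap.range T))
          = (LinearMap.ker (T ^ m)).map Q := le_antisymm hle hge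
      rw [← hcard, ← hrank, heq]

omit [FiniteDimensional k V] in
open scoped Classical in
lemma weight_eq (T : V →ₗ[k] V) {N : ℕ} (hN : T ^ N = 0) (K : V → ℕ)
    (hK : ∀ v, K v = sInf {m : ℕ | (T ^ m) v = 0}) (B : Finset V) :
    ∑ b ∈ B, K b + ∑ m ∈ Finset.range N, (B.filter fun b => (T ^ m) b = 0).card
      = N * B.card := by
  have hiff := K_le_iff T hN K hK
  have hKN : ∀ v, K v ≤ N := fun v => (hiff v N).2 (by simp [hN])
  have h1 : ∀ m, (B.filter fun b => (T ^ m) b = 0) = B.filter fun b => K b ≤ m := by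
    intro m
    apply Finset.filter_congr
    intro b _
    simp [← hiff b m]
  have h2 : ∑ m ∈ Finset.range N, (B.filter fun b => (T ^ m) b = 0).card
      = ∑ b ∈ B, (N - K b) := by
    calc ∑ m ∈ Finset.range N, (B.filter fun b => (T ^ m) b = 0).card
        = ∑ m ∈ Finset.range N, ∑ b ∈ B, (if K b ≤ m then 1 else 0) := by
          refine Finset.sum_congr rfl fun m _ => ?_
          rw [h1 m, Finset.card_filter]
      _ = ∑ b ∈ B, ∑ m ∈ Finset.range N, (if K b ≤ m then 1 else 0) := Finset.sum_comm
      _ = ∑ b ∈ B, ((Finset.range N).filter fun m => K b ≤ m).card := by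
          refine Finset.sum_congr rfl fun b _ => ?_
          rw [Finset.card_filter]
      _ = ∑ b ∈ B, (N - K b) := by
          refine Finset.sum_congr rfl fun b _ => ?_
          have : ((Finset.range N).filter fun m => K b ≤ m) = Finset.Ico (K b) N := by
            ext x
            simp only [Finset.mem_filter, Finset.mem_range, Finset.mem_Ico]
            omega
          rw [this, Nat.card_Ico]
  rw [h2, ← Finset.sum_add_distrib]
  calc ∑ b ∈ B, (K b + (N - K b)) = ∑ _b ∈ B, N := Finset.sum_congr rfl fun b hb => by
        have := hKN b; omega
    _ = N * B.card := by rw [Finset.sum_const, smul_eq_mul, mul_comm]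

open scoped Classical in
lemma exists_good (T : V →ₗ[k] V) {N : ℕ} (hN : T ^ N = 0) :
    ∃ B' : Finset V, IsQBasis T B' ∧ ∀ m : ℕ,
      finrank k ((LinearMap.ker (T ^ m)).map (LinearMap.range T).mkQ) ≤
        (B'.filter fun b => (T ^ m) b = 0).card := by
  set Q := (LinearMap.range T).mkQ with hQ
  set W : ℕ → Submodule k (V ⧸ LinearMap.range T) :=
    fun m => (LinearMap.ker (T ^ m)).map Q with hWdef
  have hWtop : ∀ m, N ≤ m → W m = ⊤ := by
    intro m hm
    have hTm : T ^ m = 0 := LinearMap.ext fun v =>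
      pow_apply_zero_mono T (by rw [hN]; rfl) hm
    show (LinearMap.ker (T ^ m)).map Q = ⊤
    rw [hTm, LinearMap.ker_zero, Submodule.map_top, Submodule.range_mkQ]
  have hWmono : Monotone W := by
    intro a b hab
    apply Submodule.map_mono
    intro v hv
    exact pow_apply_zero_mono T hv hab
  have main : ∀ m, ∃ S : Set (V ⧸ LinearMap.range T), S.Finite ∧
      LinearIndependent k ((↑) : S → V ⧸ LinearMap.range T) ∧ S ⊆ (W m : Set _) ∧
      ∀ j ≤ m, (W j : Set (V ⧸ LinearMap.range T)) ⊆ (span k (S ∩ (W j : Set (V ⧸ LinearMap.range T))) : Set (V ⧸ LinearMap.range T)) := by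
    intro m
    induction m with
    | zero =>
      refine ⟨∅, Set.finite_empty, linearIndependent_empty k _, Set.empty_subset _, ?_⟩
      intro j hj
      have hj0 : j = 0 := Nat.le_zero.mp hj
      subst hj0
      have hW0 : W 0 = ⊥ := by
        show (LinearMap.ker (T ^ 0)).map Q = ⊥
        rw [pow_zero, Module.End.one_eq_id, LinearMap.ker_id, Submodule.map_bot]
      intro x hx
      have : x ∈ W 0 := hx
      rw [hW0, Submodule.mem_bot] at this
      rw [this]
      exact Submodule.zero_mem _
    | succ m ih =>
      obtain ⟨S, hfin, hind, hsub, hsp⟩ := ih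
      obtain ⟨b, hbsub, hSb, hspb, hbind⟩ := exists_linearIndepOn_id_extension hind
        (hsub.trans (SetLike.coe_subset_coe.mpr (hWmono (Nat.le_succ m))))
      replace hbind : LinearIndependent k ((↑) : b → V ⧸ LinearMap.range T) := hbind
      refine ⟨b, hbind.setFinite, hbind, hbsub, ?_⟩
      intro j hj
      rcases Nat.of_le_succ hj with h | h
      · exact (hsp j h).trans
          (SetLike.coe_subset_coe.mpr (span_mono (Set.inter_subset_inter_left _ hSb)))
      · subst h
        rw [Set.inter_eq_left.mpr hbsub]
        exact hspb
  obtain ⟨S, hfin, hind, -, hsp⟩ := main N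
  have hspAll : ∀ m, (W m : Set (V ⧸ LinearMap.range T)) ⊆ (span k (S ∩ (W m : Set (V ⧸ LinearMap.range T))) : Set (V ⧸ LinearMap.range T)) := by
    intro m
    rcases le_total m N with h | h
    · exact hsp m h
    · have h1 : W m = ⊤ := hWtop m h
      have h2 : W N = ⊤ := hWtop N le_rfl
      have h3 := hsp N le_rfl
      rw [h2, Submodule.top_coe, Set.inter_univ] at h3
      rw [h1, Submodule.top_coe, Set.inter_univ]
      exact h3
  have hStop : span k S = ⊤ := by
    rw [eq_top_iff]
    intro x _
    have h3 := hspAll N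
    rw [hWtop N le_rfl, Submodule.top_coe, Set.inter_univ] at h3
    exact h3 (Set.mem_univ x)
  have hmem : ∀ w : V ⧸ LinearMap.range T,
      ∃ v, v ∈ LinearMap.ker (T ^ sInf {m | w ∈ W m}) ∧ Q v = w := by
    intro w
    have hnon : {m | w ∈ W m}.Nonempty :=
      ⟨N, show w ∈ W N by rw [hWtop N le_rfl]; trivial⟩
    exact Submodule.mem_map.mp (Nat.sInf_mem hnon)
  choose f hf1 hf2 using hmem
  have hfinj : Function.Injective f := fun a b h => by rw [← hf2 a, ← hf2 b, h]
  refine ⟨(hfin.image f).toFinset, ?_, ?_⟩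
  · have hBset : (((hfin.image f).toFinset : Finset V) : Set V) = f '' S :=
      Set.Finite.coe_toFinset _
    have hQB : Q '' (f '' S) = S := by
      rw [Set.image_image]
      simp only [hf2]
      exact Set.image_id S
    have hinjOn : Set.InjOn Q (f '' S) := by
      rintro _ ⟨a, _, rfl⟩ _ ⟨c, _, rfl⟩ h
      rw [hf2, hf2] at h
      rw [h]
    have hmemfS : ∀ x : ((hfin.image f).toFinset : Finset V), (↑x : V) ∈ f '' S := by
      intro x
      exact (Set.Finite.mem_toFinset _).mp x.2
    refine ⟨by rw [hBset]; exact hinjOn, ?_, by rw [hBset, hQB]; exact hStop⟩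
    · exact hind.comp
        (fun x : ((hfin.image f).toFinset : Finset V) => ⟨Q ↑x, by
          obtain ⟨a, ha, hax⟩ := hmemfS x
          rw [← hax, hf2]
          exact ha⟩)
        (fun x y hxy => Subtype.ext
          (hinjOn (hmemfS x) (hmemfS y) (congrArg Subtype.val hxy)))
  · intro m
    have hWm : finrank k ((LinearMap.ker (T ^ m)).map (LinearMap.range T).mkQ)
        = finrank k (W m) := rfl
    rw [hWm]
    set Sm := S ∩ (W m : Set _) with hSmdef
    have hSmfin : Sm.Finite := hfin.subset Set.inter_subset_left
    have hSmind : LinearIndependent k ((↑) : Sm → V ⧸ LinearMap.range T) :=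
      LinearIndepOn.mono (R := k) (v := id) hind Set.inter_subset_left
    have hr1 : finrank k (W m) ≤ finrank k (span k Sm) :=
      Submodule.finrank_mono (SetLike.coe_subset_coe.mp (hspAll m))
    have hindFin : LinearIndependent k
        ((↑) : ((hSmfin.toFinset : Finset (V ⧸ LinearMap.range T)) : Set (V ⧸ LinearMap.range T)) → V ⧸ LinearMap.range T) := by
      rw [Set.Finite.coe_toFinset]
      exact hSmind
    have hr2 : finrank k (span k Sm) = hSmfin.toFinset.card := by
      have h := finrank_span_finset_eq_card (s := hSmfin.toFinset) hindFin
      rwa [Set.Finite.coe_toFinset] at h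
    have hr3 : (hSmfin.toFinset.image f).card = hSmfin.toFinset.card :=
      Finset.card_image_of_injective _ hfinj
    have hsubF : hSmfin.toFinset.image f ⊆
        (hfin.image f).toFinset.filter (fun b => (T ^ m) b = 0) := by
      intro x hx
      simp only [Finset.mem_image, Set.Finite.mem_toFinset] at hx
      obtain ⟨w, hw, rfl⟩ := hx
      rw [Finset.mem_filter]
      refine ⟨?_, ?_⟩
      · rw [Set.Finite.mem_toFinset]
        exact ⟨w, hw.1, rfl⟩
      · have h1 : (T ^ sInf {j | w ∈ W j}) (f w) = 0 := hf1 w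
        have h2 : sInf {j | w ∈ W j} ≤ m := Nat.sInf_le hw.2
        exact pow_apply_zero_mono T h1 h2
    calc finrank k (W m) ≤ finrank k (span k Sm) := hr1
      _ = hSmfin.toFinset.card := hr2
      _ = (hSmfin.toFinset.image f).card := hr3.symm
      _ ≤ ((hfin.image f).toFinset.filter (fun b => (T ^ m) b = 0)).card :=
          Finset.card_le_card hsubF

end Aux

theorem stmt1 {k V : Type*} [Field k] [AddCommGroup V] [Module k V]
    [FiniteDimensional k V] (T : V →ₗ[k] V) (hT : ∃ n : ℕ, T ^ n = 0)
    (K : V → ℕ) (hK : ∀ v, K v = sInf {m : ℕ | (T ^ m) v = 0})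
    (B : Finset V) (hB : IsQBasis T B) :
    (∀ B' : Finset V, IsQBasis T B' → ∑ b ∈ B, K b ≤ ∑ b ∈ B', K b) ↔
    ∀ m : ℕ,
      Submodule.mkQ (LinearMap.range T) '' (LinearMap.ker (T ^ m) : Set V) ⊆
        (Submodule.span k (Submodule.mkQ (LinearMap.range T) ''
          ((B : Set V) ∩ (LinearMap.ker (T ^ m) : Set V))) : Set (V ⧸ LinearMap.range T)) := by
  classical
  obtain ⟨N, hN⟩ := hT
  constructor
  · intro hmin m
    obtain ⟨B', hB', hgood⟩ := exists_good T hN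
    have hwB := weight_eq T hN K hK B
    have hwB' := weight_eq T hN K hK B'
    rw [qb_card T hB] at hwB
    rw [qb_card T hB'] at hwB'
    have hmin' := hmin B' hB'
    have hsum : ∑ j ∈ Finset.range N, (B'.filter fun b => (T ^ j) b = 0).card ≤
        ∑ j ∈ Finset.range N, (B.filter fun b => (T ^ j) b = 0).card := by omega
    have h1 : ∑ j ∈ Finset.range N, (B.filter fun b => (T ^ j) b = 0).card ≤
        ∑ j ∈ Finset.range N,
          Module.finrank k ((LinearMap.ker (T ^ j)).map (LinearMap.range T).mkQ) :=
      Finset.sum_le_sum fun j _ => (lemA T hB j).1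
    have h2 : ∑ j ∈ Finset.range N,
          Module.finrank k ((LinearMap.ker (T ^ j)).map (LinearMap.range T).mkQ) ≤
        ∑ j ∈ Finset.range N, (B'.filter fun b => (T ^ j) b = 0).card :=
      Finset.sum_le_sum fun j _ => hgood j
    have h3 : ∑ j ∈ Finset.range N, (B.filter fun b => (T ^ j) b = 0).card =
        ∑ j ∈ Finset.range N,
          Module.finrank k ((LinearMap.ker (T ^ j)).map (LinearMap.range T).mkQ) :=
      le_antisymm h1 (le_trans h2 hsum)
    by_cases hm : m < N
    · have heq := (Finset.sum_eq_sum_iff_of_le (fun i _ => (lemA T hB i).1)).mp h3 m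
        (Finset.mem_range.mpr hm)
      exact (lemA T hB m).2.mp heq
    · push_neg at hm
      have hker : LinearMap.ker (T ^ m) = ⊤ := by
        have hTm : T ^ m = 0 := LinearMap.ext fun v =>
          pow_apply_zero_mono T (by rw [hN]; rfl) hm
        rw [hTm]
        exact LinearMap.ker_zero
      rw [hker]
      simp only [Submodule.top_coe, Set.inter_univ]
      rw [hB.2.2]
      simp
  · intro hsp B' hB'
    have heq : ∀ j, (B.filter fun b => (T ^ j) b = 0).card =
        Module.finrank k ((LinearMap.ker (T ^ j)).map (LinearMap.range T).mkQ) :=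
      fun j => (lemA T hB j).2.mpr (hsp j)
    have hle : ∀ j, (B'.filter fun b => (T ^ j) b = 0).card ≤
        Module.finrank k ((LinearMap.ker (T ^ j)).map (LinearMap.range T).mkQ) :=
      fun j => (lemA T hB' j).1
    have hsum : ∑ j ∈ Finset.range N, (B'.filter fun b => (T ^ j) b = 0).card ≤
        ∑ j ∈ Finset.range N, (B.filter fun b => (T ^ j) b = 0).card :=
      Finset.sum_le_sum fun j _ => (heq j) ▸ hle j
    have hwB := weight_eq T hN K hK B
    have hwB' := weight_eq T hN K hK B'
    rw [qb_card T hB] at hwB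
    rw [qb_card T hB'] at hwB'
    omega
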